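/- A group G is a domain (contains no nontrivial zero divisors in the sense of algebraic geometry over groups) if and only if for every nontrivial normal subgroup K ≤ G, the centralizer C_G(K) is trivial. -/

import Mathlib

open scoped commutatorElement

/-- `x` is a zero divisor: `x ≠ 1` and there is `y ≠ 1` commuting with all
conjugates of `x`. -/
def IsZeroDivisor {G : Type*} [Group G] (x : G) : Prop :=
  x ≠ 1 ∧ ∃ y : G, y ≠ 1 ∧ ∀ g : G, ⁅g⁻¹ * x * g, y⁆ = 1

theorem stmt11 {G : Type*} [Group G] :
    (∀ x : G, ¬ IsZeroDivisor x) ↔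
    (∀ K : Subgroup G, K.Normal → K ≠ ⊥ → Subgroup.centralizer (K : Set G) = ⊥) := by
  constructor
  · intro h K hK hKbot
    by_contra hne
    obtain ⟨⟨y, hyC⟩, hy1⟩ :=
      (Subgroup.ne_bot_iff_exists_ne_one (H := Subgroup.centralizer (K : Set G))).mp hne
    obtain ⟨⟨x, hxK⟩, hx1⟩ := (Subgroup.ne_bot_iff_exists_ne_one (H := K)).mp hKbot
    have hy1' : y ≠ 1 := fun hy => hy1 (Subtype.ext hy)
    have hx1' : x ≠ 1 := fun hx => hx1 (Subtype.ext hx)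
    refine h x ⟨hx1', y, hy1', fun g => ?_⟩
    rw [commutatorElement_eq_one_iff_commute]
    have hmem : g⁻¹ * x * g ∈ K := by
      have := hK.conj_mem x hxK g⁻¹
      simpa using this
    exact Subgroup.mem_centralizer_iff.mp hyC _ hmem
  · intro h x hx
    obtain ⟨hx1, y, hy1, hc⟩ := hx
    set K := Subgroup.normalClosure ({x} : Set G) with hKdef
    have hKbot : K ≠ ⊥ := by
      intro hb
      exact hx1 (Subgroup.mem_bot.mp (hb ▸ Subgroup.subset_normalClosure (Set.mem_singleton x)))
    have hKle : K ≤ Subgroup.centralizer ({y} : Set G) := by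
      rw [hKdef, Subgroup.normalClosure, Subgroup.closure_le]
      intro a ha
      rcases Group.mem_conjugatesOfSet_iff.mp ha with ⟨b, hb, hconj⟩
      rw [Set.mem_singleton_iff] at hb
      rw [hb] at hconj
      rcases hconj with ⟨c, hc'⟩
      have ha' : a = (↑c : G) * x * (↑c : G)⁻¹ := by
        rw [hc'.eq]; group
      show a ∈ Subgroup.centralizer ({y} : Set G)
      rw [Subgroup.mem_centralizer_iff]
      intro z hz
      rw [Set.mem_singleton_iff] at hz
      subst hz
      have hcomm := hc (↑c : G)⁻¹
      rw [commutatorElement_eq_one_iff_commute] at hcomm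
      simp only [inv_inv] at hcomm
      rw [ha']
      exact hcomm.symm.eq
    have hyK : y ∈ Subgroup.centralizer (K : Set G) := by
      rw [Subgroup.mem_centralizer_iff]
      intro g hg
      exact (Subgroup.mem_centralizer_iff.mp (hKle hg) y (Set.mem_singleton y)).symm
    have hcent := h K inferInstance hKbot
    rw [hcent] at hyK
    exact hy1 (Subgroup.mem_bot.mp hyK)
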